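/- Let φ(ε,ζ) be an analytic function of two complex variables on a polydisc around (0,0) with φ(0,0) = 0, and let g be a continuous complex function on a punctured disc around 0 satisfying |g(ε) − τ/ε| ≤ C for some τ ∈ ℂ* and C > 0. Then for every entire function ψ: ℂ → ℂ, the matrix-valued functions ψ(g(ε)·φ(ε, εΩ)) converge, as ε → 0, to ψ(τ ∂φ/∂ε(0,0) I_d + τ ∂φ/∂ζ(0,0) Ω), uniformly for Ω in any compact subset of ℂ^{d×d}. -/

import Mathlib

open Matrix Filter Topology

/-- `Phi a d ε Ω = φ(ε, εΩ)` where `φ(ε,ζ) = ∑ a i j ε^i ζ^j` is a two-variable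
power series: substitution of `εΩ` in the second variable. -/
noncomputable def Phi (a : ℕ → ℕ → ℂ) (d : ℕ) (ε : ℂ) (Ω : Matrix (Fin d) (Fin d) ℂ) :
    Matrix (Fin d) (Fin d) ℂ :=
  ∑' p : ℕ × ℕ, (a p.1 p.2 * ε ^ p.1) • (ε • Ω) ^ p.2

/-- Entire functional calculus: `ψ` applied to a matrix via the power series of `ψ` at 0. -/
noncomputable def psiMat (ψ : ℂ → ℂ) {d : ℕ} (M : Matrix (Fin d) (Fin d) ℂ) :
    Matrix (Fin d) (Fin d) ℂ :=
  ∑' n : ℕ, (iteratedDeriv n ψ 0 / (n.factorial : ℂ)) • M ^ n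

section Aux

attribute [local instance] Matrix.normedAddCommGroup Matrix.normedSpace

private theorem matComplete (d : ℕ) : CompleteSpace (Matrix (Fin d) (Fin d) ℂ) :=
  inferInstanceAs (CompleteSpace (Fin d → Fin d → ℂ))

attribute [local instance] matComplete

variable {d : ℕ}

private theorem entry_le (M : Matrix (Fin d) (Fin d) ℂ) (i j : Fin d) : ‖M i j‖ ≤ ‖M‖ :=
  (norm_le_pi_norm (M i) j).trans (norm_le_pi_norm M i)

private theorem norm_one_le : ‖(1 : Matrix (Fin d) (Fin d) ℂ)‖ ≤ 1 := by
  refine (pi_norm_le_iff_of_nonneg zero_le_one).mpr fun i => ?_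
  refine (pi_norm_le_iff_of_nonneg zero_le_one).mpr fun j => ?_
  by_cases h : i = j <;> simp [Matrix.one_apply, h]

private theorem matNormMulLe (M N : Matrix (Fin d) (Fin d) ℂ) :
    ‖M * N‖ ≤ d * (‖M‖ * ‖N‖) := by
  have h0 : (0:ℝ) ≤ d * (‖M‖ * ‖N‖) := by positivity
  refine (pi_norm_le_iff_of_nonneg h0).mpr fun i => ?_
  refine (pi_norm_le_iff_of_nonneg h0).mpr fun j => ?_
  calc ‖(M * N) i j‖ = ‖∑ k, M i k * N k j‖ := by rw [Matrix.mul_apply]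
    _ ≤ ∑ k, ‖M i k * N k j‖ := norm_sum_le _ _
    _ ≤ ∑ _k : Fin d, ‖M‖ * ‖N‖ := Finset.sum_le_sum fun k _ => by
        rw [norm_mul]
        exact mul_le_mul (entry_le M i k) (entry_le N k j) (norm_nonneg _) (norm_nonneg _)
    _ = d * (‖M‖ * ‖N‖) := by simp [Finset.card_univ]

private theorem matNormPowLe (M : Matrix (Fin d) (Fin d) ℂ) {b : ℝ}
    (hb : d * ‖M‖ + 1 ≤ b) : ∀ n : ℕ, ‖M ^ n‖ ≤ b ^ n := by
  have h1 : (0:ℝ) ≤ d * ‖M‖ := by positivity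
  intro n
  induction n with
  | zero => simpa using norm_one_le
  | succ n ih =>
    have hbn : (0:ℝ) ≤ b ^ n := pow_nonneg (by linarith) n
    calc ‖M ^ (n+1)‖ = ‖M ^ n * M‖ := by rw [pow_succ]
      _ ≤ d * (‖M ^ n‖ * ‖M‖) := matNormMulLe _ _
      _ = (d * ‖M‖) * ‖M ^ n‖ := by ring
      _ ≤ b * b ^ n := mul_le_mul (by linarith) ih (norm_nonneg _) (by linarith)
      _ = b ^ (n+1) := (pow_succ' b n).symm

private theorem matNormPowSubPowLe (M N : Matrix (Fin d) (Fin d) ℂ) {b : ℝ}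
    (hM : d * ‖M‖ + 1 ≤ b) (hN : d * ‖N‖ + 1 ≤ b) (n : ℕ) :
    ‖M ^ n - N ^ n‖ ≤ n * b ^ n * ((d + 1) * ‖M - N‖) := by
  have hb1 : (1:ℝ) ≤ b := le_trans (le_add_of_nonneg_left (by positivity)) hM
  have hd0 : (0:ℝ) ≤ d := Nat.cast_nonneg d
  induction n with
  | zero => simp
  | succ n ih =>
    have hbn : (0:ℝ) ≤ b ^ n := pow_nonneg (by linarith) n
    have hbsucc : b ^ n ≤ b ^ (n+1) := pow_le_pow_right₀ hb1 (Nat.le_succ n)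
    have key : M ^ (n+1) - N ^ (n+1) = M ^ n * (M - N) + (M ^ n - N ^ n) * N := by
      noncomm_ring
    have t1 : ‖M ^ n * (M - N)‖ ≤ b ^ n * ((d + 1) * ‖M - N‖) := by
      have h1 : ‖M ^ n‖ ≤ b ^ n := matNormPowLe M hM n
      calc ‖M ^ n * (M - N)‖ ≤ d * (‖M ^ n‖ * ‖M - N‖) := matNormMulLe (M ^ n) (M - N)
        _ = (d * ‖M ^ n‖) * ‖M - N‖ := by ring
        _ ≤ ((d + 1) * b ^ n) * ‖M - N‖ := by
            apply mul_le_mul_of_nonneg_right ?_ (norm_nonneg _)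
            nlinarith [mul_nonneg hd0 (sub_nonneg.mpr h1)]
        _ = b ^ n * ((d + 1) * ‖M - N‖) := by ring
    have t2 : ‖(M ^ n - N ^ n) * N‖ ≤ n * b ^ (n+1) * ((d + 1) * ‖M - N‖) := by
      have h1 := matNormMulLe (M ^ n - N ^ n) N
      have h2 : (d:ℝ) * ‖N‖ ≤ b := by linarith
      have h3 : (0:ℝ) ≤ (n:ℝ) := Nat.cast_nonneg n
      have h4 : (0:ℝ) ≤ (d + 1) * ‖M - N‖ := by positivity
      calc ‖(M ^ n - N ^ n) * N‖ ≤ d * (‖M ^ n - N ^ n‖ * ‖N‖) := h1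
        _ = (d * ‖N‖) * ‖M ^ n - N ^ n‖ := by ring
        _ ≤ b * (n * b ^ n * ((d + 1) * ‖M - N‖)) := by
            apply mul_le_mul h2 ih (norm_nonneg _) (by linarith)
        _ = (n * (b * b ^ n)) * ((d + 1) * ‖M - N‖) := by ring
        _ = n * b ^ (n+1) * ((d + 1) * ‖M - N‖) := by rw [← pow_succ']
    calc ‖M ^ (n+1) - N ^ (n+1)‖ = ‖M ^ n * (M - N) + (M ^ n - N ^ n) * N‖ := by rw [key]
      _ ≤ ‖M ^ n * (M - N)‖ + ‖(M ^ n - N ^ n) * N‖ := norm_add_le _ _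
      _ ≤ b ^ n * ((d + 1) * ‖M - N‖) + n * b ^ (n+1) * ((d + 1) * ‖M - N‖) := by
          linarith
      _ ≤ ((n:ℝ)+1) * b ^ (n+1) * ((d + 1) * ‖M - N‖) := by
          have h4 : (0:ℝ) ≤ (d + 1) * ‖M - N‖ := by positivity
          nlinarith
      _ = (((n+1 : ℕ)):ℝ) * b ^ (n+1) * ((d + 1) * ‖M - N‖) := by push_cast; ring

private theorem coeff_summable {ψ : ℂ → ℂ} (hψ : Differentiable ℂ ψ) {ρ : ℝ} (hρ : 0 ≤ ρ) :
    Summable (fun n : ℕ =>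
      ‖iteratedDeriv n ψ 0 / (n.factorial : ℂ)‖ * ((n : ℝ) + 1) * ρ ^ n) := by
  set z : ℝ := 2 * ρ + 2 with hzdef
  have hz0 : 0 < z := by positivity
  have hs : Summable (fun n : ℕ =>
      ((n.factorial : ℂ))⁻¹ • ((z : ℂ) - 0) ^ n • iteratedDeriv n ψ 0) :=
    (Complex.hasSum_taylorSeries_of_entire hψ 0 z).summable
  have hb : BddAbove (Set.range fun n : ℕ =>
      ‖((n.factorial : ℂ))⁻¹ • ((z : ℂ) - 0) ^ n • iteratedDeriv n ψ 0‖) := by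
    have ht : Tendsto (fun n : ℕ =>
        ‖((n.factorial : ℂ))⁻¹ • ((z : ℂ) - 0) ^ n • iteratedDeriv n ψ 0‖) atTop (𝓝 0) := by
      simpa using hs.tendsto_atTop_zero.norm
    exact ht.bddAbove_range
  obtain ⟨M, hM⟩ := hb
  have hM0 : (0:ℝ) ≤ M := le_trans (norm_nonneg _) (hM ⟨0, rfl⟩)
  have hnorm : ∀ n : ℕ, ‖iteratedDeriv n ψ 0 / (n.factorial : ℂ)‖ * z ^ n ≤ M := by
    intro n
    have h1 := hM ⟨n, rfl⟩
    have h2 : ‖((n.factorial : ℂ))⁻¹ • ((z : ℂ) - 0) ^ n • iteratedDeriv n ψ 0‖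
        = ‖iteratedDeriv n ψ 0 / (n.factorial : ℂ)‖ * z ^ n := by
      rw [norm_smul, norm_smul, norm_div, norm_inv, norm_pow, sub_zero, Complex.norm_real,
        Real.norm_of_nonneg hz0.le]
      ring
    exact h2.symm.trans_le h1
  have hsum2 : Summable (fun n : ℕ => M * (((n:ℝ) + 1) * (1/2 : ℝ) ^ n)) := by
    apply Summable.mul_left
    have h1 : Summable (fun n : ℕ => (n:ℝ) * (1/2 : ℝ) ^ n) := by
      simpa using summable_pow_mul_geometric_of_norm_lt_one (R := ℝ) 1
        (r := (1/2 : ℝ)) (by norm_num)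
    have h2 : Summable (fun n : ℕ => (1/2 : ℝ) ^ n) :=
      summable_geometric_of_lt_one (by norm_num) (by norm_num)
    simpa [add_mul] using h1.add h2
  apply Summable.of_nonneg_of_le (fun n => by positivity) ?_ hsum2
  intro n
  have hρz : ρ ≤ z * (1/2) := by rw [hzdef]; linarith
  have h1 : ρ ^ n ≤ (z * (1/2)) ^ n := pow_le_pow_left₀ hρ hρz n
  have h2 : (z * (1/2)) ^ n = z ^ n * (1/2) ^ n := mul_pow _ _ _
  have h3 : (0:ℝ) ≤ ‖iteratedDeriv n ψ 0 / (n.factorial : ℂ)‖ := norm_nonneg _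
  have h4 : (0:ℝ) ≤ ((n:ℝ) + 1) := by positivity
  have h5 : (0:ℝ) ≤ (1/2 : ℝ) ^ n := by positivity
  have h6 : (0:ℝ) ≤ z ^ n := by positivity
  calc ‖iteratedDeriv n ψ 0 / (n.factorial : ℂ)‖ * ((n:ℝ) + 1) * ρ ^ n
      ≤ ‖iteratedDeriv n ψ 0 / (n.factorial : ℂ)‖ * ((n:ℝ) + 1) * (z ^ n * (1/2) ^ n) := by
        rw [← h2]; exact mul_le_mul_of_nonneg_left h1 (by positivity)
    _ = (‖iteratedDeriv n ψ 0 / (n.factorial : ℂ)‖ * z ^ n) * (((n:ℝ) + 1) * (1/2) ^ n) := by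
        ring
    _ ≤ M * (((n:ℝ) + 1) * (1/2) ^ n) := by
        apply mul_le_mul_of_nonneg_right (hnorm n) (by positivity)

private theorem psiMat_summable {ψ : ℂ → ℂ} (hψ : Differentiable ℂ ψ)
    (M : Matrix (Fin d) (Fin d) ℂ) :
    Summable (fun n : ℕ => (iteratedDeriv n ψ 0 / (n.factorial : ℂ)) • M ^ n) := by
  apply Summable.of_norm
  have hρ : (0:ℝ) ≤ (d:ℝ) * ‖M‖ + 1 := by positivity
  apply Summable.of_nonneg_of_le (fun n => norm_nonneg _) ?_ (coeff_summable hψ hρ)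
  intro n
  rw [norm_smul]
  have h1 : ‖M ^ n‖ ≤ ((d:ℝ) * ‖M‖ + 1) ^ n := matNormPowLe M le_rfl n
  have h2 : (0:ℝ) ≤ ((d:ℝ) * ‖M‖ + 1) ^ n := by positivity
  have h3 : (0:ℝ) ≤ ‖iteratedDeriv n ψ 0 / (n.factorial : ℂ)‖ := norm_nonneg _
  calc ‖iteratedDeriv n ψ 0 / (n.factorial : ℂ)‖ * ‖M ^ n‖
      ≤ ‖iteratedDeriv n ψ 0 / (n.factorial : ℂ)‖ * ((d:ℝ) * ‖M‖ + 1) ^ n :=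
        mul_le_mul_of_nonneg_left h1 h3
    _ ≤ ‖iteratedDeriv n ψ 0 / (n.factorial : ℂ)‖ * ((n:ℝ) + 1) * ((d:ℝ) * ‖M‖ + 1) ^ n := by
        nlinarith [mul_nonneg (mul_nonneg h3 (Nat.cast_nonneg (α := ℝ) n)) h2]

private theorem psiMat_dist {ψ : ℂ → ℂ} (hψ : Differentiable ℂ ψ)
    (M N : Matrix (Fin d) (Fin d) ℂ) {b : ℝ}
    (hM : d * ‖M‖ + 1 ≤ b) (hN : d * ‖N‖ + 1 ≤ b) :
    ‖psiMat ψ M - psiMat ψ N‖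
      ≤ (∑' n : ℕ, ‖iteratedDeriv n ψ 0 / (n.factorial : ℂ)‖ * ((n : ℝ) + 1) * b ^ n)
        * ((d + 1) * ‖M - N‖) := by
  have hb0 : (0:ℝ) ≤ b := le_trans (by positivity) hM
  have hsM := psiMat_summable hψ M
  have hsN := psiMat_summable hψ N
  set c : ℕ → ℂ := fun n => iteratedDeriv n ψ 0 / (n.factorial : ℂ) with hc
  have hbound : ∀ n : ℕ, ‖c n • M ^ n - c n • N ^ n‖
      ≤ (‖c n‖ * ((n : ℝ) + 1) * b ^ n) * ((d + 1) * ‖M - N‖) := by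
    intro n
    rw [← smul_sub, norm_smul]
    have h := matNormPowSubPowLe M N hM hN n
    have h2 : (0:ℝ) ≤ b ^ n := by positivity
    have h3 : (0:ℝ) ≤ (d + 1 : ℝ) * ‖M - N‖ := by positivity
    have h4 : (0:ℝ) ≤ ‖c n‖ := norm_nonneg _
    calc ‖c n‖ * ‖M ^ n - N ^ n‖
        ≤ ‖c n‖ * ((n:ℝ) * b ^ n * ((d + 1) * ‖M - N‖)) := mul_le_mul_of_nonneg_left h h4
      _ ≤ (‖c n‖ * ((n : ℝ) + 1) * b ^ n) * ((d + 1) * ‖M - N‖) := by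
          nlinarith [mul_nonneg (mul_nonneg h4 h2) h3]
  have hS : Summable (fun n : ℕ =>
      (‖c n‖ * ((n : ℝ) + 1) * b ^ n) * ((d + 1) * ‖M - N‖)) :=
    (coeff_summable hψ hb0).mul_right _
  have hnorm : Summable (fun n : ℕ => ‖c n • M ^ n - c n • N ^ n‖) :=
    Summable.of_nonneg_of_le (fun _ => norm_nonneg _) hbound hS
  have heq : psiMat ψ M - psiMat ψ N = ∑' n : ℕ, (c n • M ^ n - c n • N ^ n) := by
    rw [show psiMat ψ M = ∑' n : ℕ, c n • M ^ n from rfl,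
      show psiMat ψ N = ∑' n : ℕ, c n • N ^ n from rfl]
    exact (Summable.tsum_sub hsM hsN).symm
  rw [heq]
  calc ‖∑' n : ℕ, (c n • M ^ n - c n • N ^ n)‖
      ≤ ∑' n : ℕ, ‖c n • M ^ n - c n • N ^ n‖ := norm_tsum_le_tsum_norm hnorm
    _ ≤ ∑' n : ℕ, (‖c n‖ * ((n : ℝ) + 1) * b ^ n) * ((d + 1) * ‖M - N‖) :=
        Summable.tsum_le_tsum hbound hnorm hS
    _ = (∑' n : ℕ, ‖c n‖ * ((n : ℝ) + 1) * b ^ n) * ((d + 1) * ‖M - N‖) := tsum_mul_right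

set_option maxHeartbeats 4000000 in
private theorem stmt7_aux (d : ℕ) (a : ℕ → ℕ → ℂ) (h00 : a 0 0 = 0)
    (r : ℝ) (hr : 0 < r)
    (hconv : ∀ s t : ℝ, 0 ≤ s → 0 ≤ t → s + t < r →
      Summable (fun p : ℕ × ℕ => ‖a p.1 p.2‖ * s ^ p.1 * t ^ p.2))
    (g : ℂ → ℂ) (δ C : ℝ) (hδ : 0 < δ) (hC : 0 < C)
    (τ : ℂ) (hτ : τ ≠ 0)
    (hg : ContinuousOn g (Metric.ball (0 : ℂ) δ \ {0}))
    (hgb : ∀ ε ∈ Metric.ball (0 : ℂ) δ \ {0}, ‖g ε - τ / ε‖ ≤ C)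
    (ψ : ℂ → ℂ) (hψ : ∀ z : ℂ, AnalyticAt ℂ ψ z)
    (K : Set (Matrix (Fin d) (Fin d) ℂ)) (hK : IsCompact K) :
    TendstoUniformlyOn
      (fun (ε : ℂ) (Ω : Matrix (Fin d) (Fin d) ℂ) => psiMat ψ (g ε • Phi a d ε Ω))
      (fun Ω : Matrix (Fin d) (Fin d) ℂ =>
        psiMat ψ ((τ * a 1 0) • (1 : Matrix (Fin d) (Fin d) ℂ) + (τ * a 0 1) • Ω))
      (𝓝[≠] (0 : ℂ)) K := by
  classical
  have hψd : Differentiable ℂ ψ := fun z => (hψ z).differentiableAt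
  have hd0 : (0:ℝ) ≤ (d:ℝ) := Nat.cast_nonneg d
  obtain ⟨B0, hB0⟩ : ∃ B0 : ℝ, ∀ Ω ∈ K, ‖Ω‖ ≤ B0 :=
    isBounded_iff_forall_norm_le.mp hK.isBounded
  set B : ℝ := max B0 0 with hBdef
  have hB0' : (0:ℝ) ≤ B := le_max_right _ _
  have hB : ∀ Ω ∈ K, ‖Ω‖ ≤ B := fun Ω h => (hB0 Ω h).trans (le_max_left _ _)
  set B1 : ℝ := d * B + 1 with hB1def
  have hB1 : (1:ℝ) ≤ B1 := le_add_of_nonneg_left (by positivity)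
  have hB1pos : (0:ℝ) < B1 := lt_of_lt_of_le one_pos hB1
  set ε0 : ℝ := r / (2 * (B1 + 1)) with hε0def
  have hε0 : 0 < ε0 := by rw [hε0def]; positivity
  have hstlt : ε0 + ε0 * B1 < r := by
    have h1 : ε0 * (B1 + 1) = r / 2 := by
      rw [hε0def]; field_simp
    nlinarith
  have hSsum : Summable
      (fun p : ℕ × ℕ => ‖a p.1 p.2‖ * ε0 ^ p.1 * (ε0 * B1) ^ p.2) :=
    hconv ε0 (ε0 * B1) hε0.le (by positivity) hstlt
  set S : ℝ := ∑' p : ℕ × ℕ, ‖a p.1 p.2‖ * ε0 ^ p.1 * (ε0 * B1) ^ p.2 with hSdef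
  have habs : ∀ z : ℂ, ‖z‖ = ‖z‖ := fun z => rfl
  have hS0 : 0 ≤ S := tsum_nonneg fun p => by
    have := norm_nonneg (a p.1 p.2); positivity
  set A1 : ℝ := ‖a 1 0‖ with hA1def
  set A2 : ℝ := ‖a 0 1‖ with hA2def
  have hA1 : 0 ≤ A1 := norm_nonneg _
  have hA2 : 0 ≤ A2 := norm_nonneg _
  set SS : ℝ := S / ε0 ^ 2 with hSSdef
  have hSS0 : 0 ≤ SS := by rw [hSSdef]; positivity
  set C4 : ℝ := C * SS + ‖τ‖ * SS + C * (A1 + A2 * B) with hC4def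
  have hC4 : 0 ≤ C4 := by
    rw [hC4def]
    have h1 : 0 ≤ C * SS := mul_nonneg hC.le hSS0
    have h2 : 0 ≤ ‖τ‖ * SS := mul_nonneg (norm_nonneg τ) hSS0
    have h3 : 0 ≤ C * (A1 + A2 * B) :=
      mul_nonneg hC.le (add_nonneg hA1 (mul_nonneg hA2 hB0'))
    linarith
  set R0 : ℝ := ‖τ‖ * (A1 + A2 * B) with hR0def
  have hR00 : 0 ≤ R0 := by
    rw [hR0def]
    exact mul_nonneg (norm_nonneg τ) (add_nonneg hA1 (mul_nonneg hA2 hB0'))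
  set R : ℝ := R0 + C4 with hRdef
  have hR0 : 0 ≤ R := by rw [hRdef]; linarith
  set b : ℝ := d * R + 1 with hbdef
  set Tb : ℝ := ∑' n : ℕ, ‖iteratedDeriv n ψ 0 / (n.factorial : ℂ)‖ * ((n : ℝ) + 1) * b ^ n
    with hTbdef
  have hTb0 : 0 ≤ Tb := tsum_nonneg fun n => by
    have h1 : (0:ℝ) ≤ ‖iteratedDeriv n ψ 0 / (n.factorial : ℂ)‖ := norm_nonneg _
    have h2 : (0:ℝ) ≤ b := by rw [hbdef]; positivity
    positivity
  set Lip : ℝ := Tb * ((d:ℝ) + 1) with hLipdef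
  have hLip0 : 0 ≤ Lip := by rw [hLipdef]; positivity
  -- the key pointwise estimate
  have key : ∀ ε : ℂ, ε ≠ 0 → ‖ε‖ < δ → ‖ε‖ ≤ ε0 → ‖ε‖ ≤ 1 → ∀ Ω ∈ K,
      ‖g ε • Phi a d ε Ω - ((τ * a 1 0) • (1 : Matrix (Fin d) (Fin d) ℂ)
        + (τ * a 0 1) • Ω)‖ ≤ C4 * ‖ε‖ := by
    intro ε hne hδ' hε0' h1' Ω hΩK
    have hs0 : 0 < ‖ε‖ := norm_pos_iff.mpr hne
    have hΩB : ‖Ω‖ ≤ B := hB Ω hΩK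
    have hB1Ω : (d:ℝ) * ‖Ω‖ + 1 ≤ B1 := by
      rw [hB1def]
      have := mul_le_mul_of_nonneg_left hΩB hd0
      linarith
    set f : ℕ × ℕ → Matrix (Fin d) (Fin d) ℂ :=
      fun p => (a p.1 p.2 * ε ^ p.1) • (ε • Ω) ^ p.2 with hfdef
    have hterm : ∀ p : ℕ × ℕ,
        ‖f p‖ ≤ ‖a p.1 p.2‖ * ‖ε‖ ^ p.1 * (‖ε‖ * B1) ^ p.2 := by
      rintro ⟨i, j⟩
      have hΩpow : ‖Ω ^ j‖ ≤ B1 ^ j := matNormPowLe Ω hB1Ω j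
      calc ‖f (i, j)‖ = ‖a i j‖ * ‖ε‖ ^ i * (‖ε‖ ^ j * ‖Ω ^ j‖) := by
            rw [hfdef]
            simp only [smul_pow, norm_smul, norm_mul, norm_pow]
        _ ≤ ‖a i j‖ * ‖ε‖ ^ i * (‖ε‖ ^ j * B1 ^ j) := by
            have h2 : (0:ℝ) ≤ ‖a i j‖ * ‖ε‖ ^ i := by positivity
            have h3 : (0:ℝ) ≤ ‖ε‖ ^ j := by positivity
            exact mul_le_mul_of_nonneg_left
              (mul_le_mul_of_nonneg_left hΩpow h3) h2
        _ = ‖a i j‖ * ‖ε‖ ^ i * (‖ε‖ * B1) ^ j := by rw [mul_pow]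
    have hfull : ∀ p : ℕ × ℕ,
        ‖f p‖ ≤ ‖a p.1 p.2‖ * ε0 ^ p.1 * (ε0 * B1) ^ p.2 := by
      intro p
      refine (hterm p).trans ?_
      rw [habs]
      have hB10 : (0:ℝ) ≤ B1 := le_trans zero_le_one hB1
      have e1 : ‖ε‖ ^ p.1 ≤ ε0 ^ p.1 := pow_le_pow_left₀ (norm_nonneg ε) hε0' _
      have e2 : (‖ε‖ * B1) ^ p.2 ≤ (ε0 * B1) ^ p.2 :=
        pow_le_pow_left₀ (by positivity) (mul_le_mul_of_nonneg_right hε0' hB10) _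
      have e3 : ‖a p.1 p.2‖ * ‖ε‖ ^ p.1 ≤ ‖a p.1 p.2‖ * ε0 ^ p.1 :=
        mul_le_mul_of_nonneg_left e1 (norm_nonneg _)
      exact mul_le_mul e3 e2 (by positivity) (by positivity)
    have hnormf : Summable (fun p : ℕ × ℕ => ‖f p‖) :=
      Summable.of_nonneg_of_le (fun _ => norm_nonneg _) hfull hSsum
    have hsummf : Summable f := Summable.of_norm hnormf
    set T : Finset (ℕ × ℕ) := {(0,0), (1,0), (0,1)} with hTdef
    have hsplit := Summable.sum_add_tsum_subtype_compl hsummf T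
    have hTsum : ∑ p ∈ T, f p
        = (a 1 0 * ε) • (1 : Matrix (Fin d) (Fin d) ℂ) + (a 0 1 * ε) • Ω := by
      rw [hTdef]
      rw [Finset.sum_insert (by decide), Finset.sum_insert (by decide),
        Finset.sum_singleton]
      simp [hfdef, h00, smul_smul]
    set E : Matrix (Fin d) (Fin d) ℂ := ∑' p : {x : ℕ × ℕ // x ∉ T}, f p with hEdef
    have hPhiE : Phi a d ε Ω
        = ((a 1 0 * ε) • (1 : Matrix (Fin d) (Fin d) ℂ) + (a 0 1 * ε) • Ω) + E := by
      have h1 : Phi a d ε Ω = ∑' p : ℕ × ℕ, f p := rfl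
      rw [h1, ← hsplit, hTsum]
    have hcompl2 : ∀ p : {x : ℕ × ℕ // x ∉ T}, 2 ≤ p.1.1 + p.1.2 := by
      rintro ⟨⟨i, j⟩, hp⟩
      show 2 ≤ i + j
      simp only [hTdef, Finset.mem_insert, Finset.mem_singleton, Prod.mk.injEq,
        not_or] at hp
      obtain ⟨h1, h2, h3⟩ := hp
      omega
    have hEterm : ∀ p : {x : ℕ × ℕ // x ∉ T},
        ‖f p.1‖ ≤ (‖ε‖ / ε0) ^ 2
          * (‖a p.1.1 p.1.2‖ * ε0 ^ p.1.1 * (ε0 * B1) ^ p.1.2) := by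
      rintro ⟨⟨i, j⟩, hp⟩
      have hij : 2 ≤ i + j := hcompl2 ⟨⟨i, j⟩, hp⟩
      refine (hterm (i, j)).trans ?_
      rw [habs]
      obtain ⟨m, hm⟩ : ∃ m, i + j = 2 + m := ⟨i + j - 2, by omega⟩
      have h3 : ‖ε‖ ^ (i + j) ≤ (‖ε‖ / ε0) ^ 2 * ε0 ^ (i + j) := by
        rw [hm, pow_add, pow_add, div_pow]
        have h4 : ‖ε‖ ^ 2 / ε0 ^ 2 * (ε0 ^ 2 * ε0 ^ m) = ‖ε‖ ^ 2 * ε0 ^ m := by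
          field_simp
        rw [h4]
        have h5 : ‖ε‖ ^ m ≤ ε0 ^ m := pow_le_pow_left₀ (norm_nonneg ε) hε0' m
        have h6 : (0:ℝ) ≤ ‖ε‖ ^ 2 := by positivity
        exact mul_le_mul_of_nonneg_left h5 h6
      have hB1j : (0:ℝ) ≤ B1 ^ j := by positivity
      have ha0 : (0:ℝ) ≤ ‖a i j‖ := norm_nonneg _
      calc ‖a i j‖ * ‖ε‖ ^ i * (‖ε‖ * B1) ^ j
          = ‖a i j‖ * (‖ε‖ ^ (i + j) * B1 ^ j) := by
            rw [mul_pow, pow_add]; ring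
        _ ≤ ‖a i j‖ * ((‖ε‖ / ε0) ^ 2 * ε0 ^ (i + j) * B1 ^ j) := by
            apply mul_le_mul_of_nonneg_left _ ha0
            exact mul_le_mul_of_nonneg_right h3 hB1j
        _ = (‖ε‖ / ε0) ^ 2 * (‖a i j‖ * ε0 ^ i * (ε0 * B1) ^ j) := by
            rw [mul_pow, pow_add]; ring
    have hEnormsub : Summable (fun p : {x : ℕ × ℕ // x ∉ T} => ‖f p.1‖) :=
      hnormf.subtype _
    have hgsub : Summable (fun p : {x : ℕ × ℕ // x ∉ T} =>
        (‖ε‖ / ε0) ^ 2 * (‖a p.1.1 p.1.2‖ * ε0 ^ p.1.1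
          * (ε0 * B1) ^ p.1.2)) :=
      (hSsum.mul_left ((‖ε‖ / ε0) ^ 2)).subtype _
    have hEbound : ‖E‖ ≤ (‖ε‖ / ε0) ^ 2 * S := by
      calc ‖E‖ ≤ ∑' p : {x : ℕ × ℕ // x ∉ T}, ‖f p.1‖ :=
            norm_tsum_le_tsum_norm hEnormsub
        _ ≤ ∑' p : {x : ℕ × ℕ // x ∉ T}, (‖ε‖ / ε0) ^ 2
              * (‖a p.1.1 p.1.2‖ * ε0 ^ p.1.1 * (ε0 * B1) ^ p.1.2) :=
            Summable.tsum_le_tsum hEterm hEnormsub hgsub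
        _ = (‖ε‖ / ε0) ^ 2 * ∑' p : {x : ℕ × ℕ // x ∉ T},
              (‖a p.1.1 p.1.2‖ * ε0 ^ p.1.1 * (ε0 * B1) ^ p.1.2) :=
            tsum_mul_left
        _ ≤ (‖ε‖ / ε0) ^ 2 * S := by
            apply mul_le_mul_of_nonneg_left _ (by positivity)
            rw [hSdef]
            refine Summable.tsum_le_tsum_of_inj (fun p => p.1) Subtype.val_injective
              (fun p _ => ?_) (fun p => le_rfl) (hSsum.subtype _) hSsum
            have := norm_nonneg (a p.1 p.2); positivity
    have hεmem : ε ∈ Metric.ball (0 : ℂ) δ \ {0} :=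
      ⟨mem_ball_zero_iff.mpr hδ', hne⟩
    have hgb' : ‖g ε - τ / ε‖ ≤ C := by rw [← habs]; exact hgb ε hεmem
    have hg1 : ‖g ε * ε - τ‖ ≤ C * ‖ε‖ := by
      have h : g ε * ε - τ = (g ε - τ / ε) * ε := by
        rw [sub_mul, div_mul_cancel₀ _ hne]
      rw [h, norm_mul]
      exact mul_le_mul_of_nonneg_right hgb' (norm_nonneg ε)
    have hg2 : ‖g ε‖ ≤ C + ‖τ‖ / ‖ε‖ := by
      have h : g ε = (g ε - τ / ε) + τ / ε := by ring
      calc ‖g ε‖ = ‖(g ε - τ / ε) + τ / ε‖ := by rw [← h]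
        _ ≤ ‖g ε - τ / ε‖ + ‖τ / ε‖ := norm_add_le _ _
        _ ≤ C + ‖τ‖ / ‖ε‖ := by rw [norm_div]; exact add_le_add_left hgb' _
    set L' : Matrix (Fin d) (Fin d) ℂ :=
      (a 1 0) • (1 : Matrix (Fin d) (Fin d) ℂ) + (a 0 1) • Ω with hL'def
    have hdecomp : g ε • Phi a d ε Ω
        - ((τ * a 1 0) • (1 : Matrix (Fin d) (Fin d) ℂ) + (τ * a 0 1) • Ω)
        = g ε • E + (g ε * ε - τ) • L' := by
      rw [hPhiE, hL'def]
      module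
    have hL' : ‖L'‖ ≤ A1 + A2 * B := by
      rw [hL'def]
      calc ‖(a 1 0) • (1 : Matrix (Fin d) (Fin d) ℂ) + (a 0 1) • Ω‖
          ≤ ‖(a 1 0) • (1 : Matrix (Fin d) (Fin d) ℂ)‖ + ‖(a 0 1) • Ω‖ :=
            norm_add_le _ _
        _ = ‖a 1 0‖ * ‖(1 : Matrix (Fin d) (Fin d) ℂ)‖ + ‖a 0 1‖ * ‖Ω‖ := by
            rw [norm_smul, norm_smul]
        _ ≤ ‖a 1 0‖ * 1 + ‖a 0 1‖ * B := by
            gcongr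
            · exact norm_one_le
        _ = A1 + A2 * B := by rw [hA1def, hA2def]; ring
    rw [hdecomp]
    have hexp : (C + ‖τ‖ / ‖ε‖) * ((‖ε‖ / ε0) ^ 2 * S)
        = C * SS * ‖ε‖ ^ 2 + ‖τ‖ * SS * ‖ε‖ := by
      rw [hSSdef]
      field_simp [hs0.ne', hε0.ne']
    calc ‖g ε • E + (g ε * ε - τ) • L'‖
        ≤ ‖g ε • E‖ + ‖(g ε * ε - τ) • L'‖ := norm_add_le _ _
      _ = ‖g ε‖ * ‖E‖ + ‖g ε * ε - τ‖ * ‖L'‖ := by rw [norm_smul, norm_smul]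
      _ ≤ (C + ‖τ‖ / ‖ε‖) * ((‖ε‖ / ε0) ^ 2 * S) + (C * ‖ε‖) * (A1 + A2 * B) := by
          apply add_le_add
          · apply mul_le_mul hg2 hEbound (norm_nonneg E)
            have : 0 ≤ ‖τ‖ / ‖ε‖ := by positivity
            linarith
          · exact mul_le_mul hg1 hL' (norm_nonneg L') (by positivity)
      _ = C * SS * ‖ε‖ ^ 2 + ‖τ‖ * SS * ‖ε‖ + C * (A1 + A2 * B) * ‖ε‖ := by
          rw [hexp]; ring
      _ ≤ C4 * ‖ε‖ := by
          rw [hC4def]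
          have h7 : C * SS * ‖ε‖ ^ 2 ≤ C * SS * ‖ε‖ := by
            have h8 : 0 ≤ C * SS := mul_nonneg hC.le hSS0
            nlinarith [mul_nonneg (mul_nonneg h8 hs0.le) (sub_nonneg.mpr h1')]
          nlinarith
  -- conclusion
  refine Metric.tendstoUniformlyOn_iff.mpr ?_
  intro η hη
  have hLipC4 : 0 ≤ Lip * C4 := mul_nonneg hLip0 hC4
  set ε1 : ℝ := min δ (min ε0 (min 1 (η / (Lip * C4 + 1)))) with hε1def
  have hε1pos : 0 < ε1 := by
    refine lt_min hδ (lt_min hε0 (lt_min one_pos ?_))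
    positivity
  have hev1 : ∀ᶠ ε : ℂ in 𝓝[≠] 0, ‖ε‖ < ε1 := by
    apply eventually_nhdsWithin_of_eventually_nhds
    filter_upwards [Metric.ball_mem_nhds (0 : ℂ) hε1pos] with x hx
    simpa [mem_ball_zero_iff] using hx
  have hev2 : ∀ᶠ ε : ℂ in 𝓝[≠] 0, ε ≠ 0 := eventually_mem_nhdsWithin
  filter_upwards [hev1, hev2] with ε hεlt hne
  intro Ω hΩK
  have hδ' : ‖ε‖ < δ := lt_of_lt_of_le hεlt (min_le_left _ _)
  have hε0' : ‖ε‖ ≤ ε0 :=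
    le_of_lt (lt_of_lt_of_le hεlt ((min_le_right _ _).trans (min_le_left _ _)))
  have h1' : ‖ε‖ ≤ 1 :=
    le_of_lt (lt_of_lt_of_le hεlt ((min_le_right _ _).trans
      ((min_le_right _ _).trans (min_le_left _ _))))
  have hηε : ‖ε‖ < η / (Lip * C4 + 1) :=
    lt_of_lt_of_le hεlt ((min_le_right _ _).trans
      ((min_le_right _ _).trans (min_le_right _ _)))
  have hkey := key ε hne hδ' hε0' h1' Ω hΩK
  set Fm : Matrix (Fin d) (Fin d) ℂ := g ε • Phi a d ε Ω with hFmdef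
  set Lm : Matrix (Fin d) (Fin d) ℂ :=
    (τ * a 1 0) • (1 : Matrix (Fin d) (Fin d) ℂ) + (τ * a 0 1) • Ω with hLmdef
  have hLmR0 : ‖Lm‖ ≤ R0 := by
    rw [hLmdef, hR0def]
    calc ‖(τ * a 1 0) • (1 : Matrix (Fin d) (Fin d) ℂ) + (τ * a 0 1) • Ω‖
        ≤ ‖(τ * a 1 0) • (1 : Matrix (Fin d) (Fin d) ℂ)‖ + ‖(τ * a 0 1) • Ω‖ :=
          norm_add_le _ _
      _ = ‖τ‖ * ‖a 1 0‖ * ‖(1 : Matrix (Fin d) (Fin d) ℂ)‖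
            + ‖τ‖ * ‖a 0 1‖ * ‖Ω‖ := by rw [norm_smul, norm_smul, norm_mul, norm_mul]
      _ ≤ ‖τ‖ * ‖a 1 0‖ * 1 + ‖τ‖ * ‖a 0 1‖ * B := by
          gcongr
          · exact norm_one_le
          · exact hB Ω hΩK
      _ = ‖τ‖ * (A1 + A2 * B) := by rw [hA1def, hA2def]; ring
  have hFmR : ‖Fm‖ ≤ R := by
    have h2 : ‖Fm - Lm‖ ≤ C4 * ‖ε‖ := hkey
    have h3 : C4 * ‖ε‖ ≤ C4 := by nlinarith [norm_nonneg ε]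
    calc ‖Fm‖ = ‖Lm + (Fm - Lm)‖ := by rw [add_sub_cancel]
      _ ≤ ‖Lm‖ + ‖Fm - Lm‖ := norm_add_le _ _
      _ ≤ R0 + C4 := add_le_add hLmR0 (h2.trans h3)
      _ = R := hRdef.symm
  have hLmR : ‖Lm‖ ≤ R := hLmR0.trans (by rw [hRdef]; linarith)
  have hbF : (d:ℝ) * ‖Fm‖ + 1 ≤ b := by
    rw [hbdef]
    have := mul_le_mul_of_nonneg_left hFmR hd0
    linarith
  have hbL : (d:ℝ) * ‖Lm‖ + 1 ≤ b := by
    rw [hbdef]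
    have := mul_le_mul_of_nonneg_left hLmR hd0
    linarith
  have hdistb := psiMat_dist hψd Lm Fm hbL hbF
  rw [dist_eq_norm]
  have hpos1 : (0:ℝ) < Lip * C4 + 1 := by linarith
  calc ‖psiMat ψ Lm - psiMat ψ Fm‖
      ≤ Tb * (((d:ℝ) + 1) * ‖Lm - Fm‖) := hdistb
    _ = Lip * ‖Fm - Lm‖ := by rw [hLipdef, norm_sub_rev]; ring
    _ ≤ Lip * (C4 * ‖ε‖) := mul_le_mul_of_nonneg_left hkey hLip0
    _ ≤ (Lip * C4 + 1) * ‖ε‖ := by nlinarith [norm_nonneg ε]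
    _ < η := by
        have := (lt_div_iff₀ hpos1).mp hηε
        linarith [this]

end Aux

theorem stmt7 (d : ℕ) (a : ℕ → ℕ → ℂ) (h00 : a 0 0 = 0)
    (r : ℝ) (hr : 0 < r)
    (hconv : ∀ s t : ℝ, 0 ≤ s → 0 ≤ t → s + t < r →
      Summable (fun p : ℕ × ℕ => ‖a p.1 p.2‖ * s ^ p.1 * t ^ p.2))
    (g : ℂ → ℂ) (δ C : ℝ) (hδ : 0 < δ) (hC : 0 < C)
    (τ : ℂ) (hτ : τ ≠ 0)
    (hg : ContinuousOn g (Metric.ball (0 : ℂ) δ \ {0}))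
    (hgb : ∀ ε ∈ Metric.ball (0 : ℂ) δ \ {0}, ‖g ε - τ / ε‖ ≤ C)
    (ψ : ℂ → ℂ) (hψ : ∀ z : ℂ, AnalyticAt ℂ ψ z)
    (K : Set (Matrix (Fin d) (Fin d) ℂ)) (hK : IsCompact K) :
    TendstoUniformlyOn
      (fun (ε : ℂ) (Ω : Matrix (Fin d) (Fin d) ℂ) => psiMat ψ (g ε • Phi a d ε Ω))
      (fun Ω : Matrix (Fin d) (Fin d) ℂ =>
        psiMat ψ ((τ * a 1 0) • (1 : Matrix (Fin d) (Fin d) ℂ) + (τ * a 0 1) • Ω))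
      (𝓝[≠] (0 : ℂ)) K := by
  exact stmt7_aux d a h00 r hr hconv g δ C hδ hC τ hτ hg hgb ψ hψ K hK
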